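/- Let S ⊆ [m] × [n] with G_S doubly chordal bipartite, let u ∈ ℝ^S, and for (i,j) ∈ S define x_{ij} = u_{i+} · u_{+j} · (∏_{C ∈ Int(ij)} C⁺) · (∏_{D ∈ Max(S) \ Max(ij)} D⁺). Then for every column j₀, Σ_{i : (i,j₀) ∈ S} x_{i j₀} = u_{+j₀} · ∏_{D ∈ Max(S)} D⁺. -/

import Mathlib

open Finset

open scoped Classical

/-- The bipartite graph associated to `S ⊆ [m] × [n]`. -/
def qiGraph (m n : ℕ) (S : Finset (Fin m × Fin n)) : SimpleGraph (Fin m ⊕ Fin n) :=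
  SimpleGraph.fromRel (fun a b =>
    ∃ p : Fin m × Fin n, p ∈ S ∧ a = Sum.inl p.1 ∧ b = Sum.inr p.2)

/-- A chord of a closed walk: an edge of `G` between vertices of the walk that is not
an edge of the walk. -/
def IsChord {V : Type*} (G : SimpleGraph V) {v : V} (c : G.Walk v v) (e : Sym2 V) : Prop :=
  e ∈ G.edgeSet ∧ e ∉ c.edges ∧ ∀ x ∈ e, x ∈ c.support

/-- Every cycle of length at least 6 has at least one chord. -/
def ChordalBipartite {V : Type*} (G : SimpleGraph V) : Prop :=
  ∀ (v : V) (c : G.Walk v v), c.IsCycle → 6 ≤ c.length → ∃ e : Sym2 V, IsChord G c e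

/-- Every cycle of length at least 6 has at least two chords. -/
def DoublyChordalBipartite {V : Type*} (G : SimpleGraph V) : Prop :=
  ∀ (v : V) (c : G.Walk v v), c.IsCycle → 6 ≤ c.length →
    ∃ e₁ e₂ : Sym2 V, e₁ ≠ e₂ ∧ IsChord G c e₁ ∧ IsChord G c e₂

variable {m n : ℕ}

/-- A (nonempty) clique in `S`: a subset of `S` of the form `R × T`. -/
def IsGridClique (S C : Finset (Fin m × Fin n)) : Prop :=
  C.Nonempty ∧ C ⊆ S ∧ ∀ p ∈ C, ∀ q ∈ C, (p.1, q.2) ∈ C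

/-- A maximal clique in `S`. -/
def IsMaxClique (S C : Finset (Fin m × Fin n)) : Prop :=
  IsGridClique S C ∧ ∀ C', IsGridClique S C' → C ⊆ C' → C = C'

/-- `Max(S)`: the set of maximal cliques of `S`. -/
noncomputable def maxCliques (S : Finset (Fin m × Fin n)) : Finset (Finset (Fin m × Fin n)) :=
  S.powerset.filter (IsMaxClique S)

/-- `Max(x)`: maximal cliques containing the index `x`. -/
noncomputable def maxCliquesAt (S : Finset (Fin m × Fin n)) (x : Fin m × Fin n) :
    Finset (Finset (Fin m × Fin n)) :=
  (maxCliques S).filter (fun D => x ∈ D)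

/-- Pairwise intersections of distinct maximal cliques of `S`. -/
noncomputable def pairInts (S : Finset (Fin m × Fin n)) : Finset (Finset (Fin m × Fin n)) :=
  ((maxCliques S ×ˢ maxCliques S).filter (fun P => P.1 ≠ P.2)).image (fun P => P.1 ∩ P.2)

/-- `Int(S)`: containment-maximal pairwise intersections of maximal cliques of `S`. -/
noncomputable def maxInts (S : Finset (Fin m × Fin n)) : Finset (Finset (Fin m × Fin n)) :=
  (pairInts S).filter (fun C => ∀ C' ∈ pairInts S, C ⊆ C' → C = C')

/-- Pairwise intersections of distinct elements of `Max(x)`. -/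
noncomputable def pairIntsAt (S : Finset (Fin m × Fin n)) (x : Fin m × Fin n) :
    Finset (Finset (Fin m × Fin n)) :=
  ((maxCliquesAt S x ×ˢ maxCliquesAt S x).filter (fun P => P.1 ≠ P.2)).image
    (fun P => P.1 ∩ P.2)

/-- `Int(x)`: containment-maximal pairwise intersections of elements of `Max(x)`. -/
noncomputable def maxIntsAt (S : Finset (Fin m × Fin n)) (x : Fin m × Fin n) :
    Finset (Finset (Fin m × Fin n)) :=
  (pairIntsAt S x).filter (fun C => ∀ C' ∈ pairIntsAt S x, C ⊆ C' → C = C')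

/-- The rows of column `j` that are also nonzero rows of column `j₀`. -/
noncomputable def colRows (S : Finset (Fin m × Fin n)) (j₀ j : Fin n) : Finset (Fin m) :=
  Finset.univ.filter (fun i => (i, j) ∈ S ∧ (i, j₀) ∈ S)

/-- The clique induced by the block (w.r.t. column `j₀`) of the column `j`. -/
noncomputable def inducedClique (S : Finset (Fin m × Fin n)) (j₀ j : Fin n) :
    Finset (Fin m × Fin n) :=
  Finset.univ.filter (fun p => p.1 ∈ colRows S j₀ j ∧ colRows S j₀ j ⊆ colRows S j₀ p.2)

/-- The row indices of a subset of `S`. -/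
noncomputable def rowsOf (D : Finset (Fin m × Fin n)) : Finset (Fin m) := D.image Prod.fst

/-- An element of the poset `P(j₀)`: a maximal clique of `S` meeting column `j₀`. -/
def PNode (S : Finset (Fin m × Fin n)) (j₀ : Fin n) (D : Finset (Fin m × Fin n)) : Prop :=
  IsMaxClique S D ∧ ∃ i, (i, j₀) ∈ D

/-- `PCovers S j₀ Dβ Dα` means `Dα ⋖ Dβ` in the poset `P(j₀)` (ordered by
containment of row sets). -/
def PCovers (S : Finset (Fin m × Fin n)) (j₀ : Fin n) (Dβ Dα : Finset (Fin m × Fin n)) : Prop :=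
  PNode S j₀ Dα ∧ PNode S j₀ Dβ ∧ rowsOf Dα ⊂ rowsOf Dβ ∧
    ¬ ∃ Dγ, PNode S j₀ Dγ ∧ rowsOf Dα ⊂ rowsOf Dγ ∧ rowsOf Dγ ⊂ rowsOf Dβ

/-- `C⁺`: the sum of the entries of `u` indexed by `C`. -/
def cliqueSum (u : Fin m × Fin n → ℝ) (C : Finset (Fin m × Fin n)) : ℝ := ∑ x ∈ C, u x

/-- `u_{i+}`: the `i`-th row marginal of `u` over `S`. -/
noncomputable def rowMarg (S : Finset (Fin m × Fin n)) (u : Fin m × Fin n → ℝ) (i : Fin m) : ℝ :=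
  ∑ x ∈ S.filter (fun x => x.1 = i), u x

/-- `u_{+j}`: the `j`-th column marginal of `u` over `S`. -/
noncomputable def colMarg (S : Finset (Fin m × Fin n)) (u : Fin m × Fin n → ℝ) (j : Fin n) : ℝ :=
  ∑ x ∈ S.filter (fun x => x.2 = j), u x

/-- `u_{++}`: the total sum of `u` over `S`. -/
def totalSum (S : Finset (Fin m × Fin n)) (u : Fin m × Fin n → ℝ) : ℝ := ∑ x ∈ S, u x

/-- The cleared-denominator quantities `x_{ij}`. -/
noncomputable def xval (S : Finset (Fin m × Fin n)) (u : Fin m × Fin n → ℝ)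
    (x : Fin m × Fin n) : ℝ :=
  rowMarg S u x.1 * colMarg S u x.2 * (∏ C ∈ maxIntsAt S x, cliqueSum u C) *
    ∏ D ∈ maxCliques S \ maxCliquesAt S x, cliqueSum u D

set_option maxHeartbeats 1000000

noncomputable def colsOf (D : Finset (Fin m × Fin n)) : Finset (Fin n) := D.image Prod.snd

lemma mem_maxCliques {S D : Finset (Fin m × Fin n)} :
    D ∈ maxCliques S ↔ IsMaxClique S D := by
  simp only [maxCliques, mem_filter, mem_powerset, and_iff_right_iff_imp]
  exact fun h => h.1.2.1

lemma gridClique_eq_prod {S C : Finset (Fin m × Fin n)} (h : IsGridClique S C) :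
    C = rowsOf C ×ˢ colsOf C := by
  ext ⟨i, j⟩
  simp only [mem_product, rowsOf, colsOf, mem_image]
  constructor
  · exact fun hij => ⟨⟨(i,j), hij, rfl⟩, ⟨(i,j), hij, rfl⟩⟩
  · rintro ⟨⟨p, hp, rfl⟩, ⟨q, hq, rfl⟩⟩
    exact h.2.2 p hp q hq

lemma mem_gridClique {S C : Finset (Fin m × Fin n)} (h : IsGridClique S C)
    {i : Fin m} {j : Fin n} : (i, j) ∈ C ↔ i ∈ rowsOf C ∧ j ∈ colsOf C := by
  conv_lhs => rw [gridClique_eq_prod h]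
  simp [mem_product]

lemma rowsOf_nonempty {S C : Finset (Fin m × Fin n)} (h : IsGridClique S C) :
    (rowsOf C).Nonempty := h.1.image _

lemma colsOf_nonempty {S C : Finset (Fin m × Fin n)} (h : IsGridClique S C) :
    (colsOf C).Nonempty := h.1.image _

lemma isGridClique_prod {S : Finset (Fin m × Fin n)} {R : Finset (Fin m)}
    {T : Finset (Fin n)} (hR : R.Nonempty) (hT : T.Nonempty)
    (h : ∀ i ∈ R, ∀ j ∈ T, (i, j) ∈ S) : IsGridClique S (R ×ˢ T) := by
  refine ⟨hR.product hT, ?_, ?_⟩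
  · intro p hp
    rw [mem_product] at hp
    exact h p.1 hp.1 p.2 hp.2
  · intro p hp q hq
    rw [mem_product] at hp hq ⊢
    exact ⟨hp.1, hq.2⟩

/-- Every grid clique is contained in a maximal clique. -/
lemma exists_maxClique_superset {S C : Finset (Fin m × Fin n)} (h : IsGridClique S C) :
    ∃ D, IsMaxClique S D ∧ C ⊆ D := by
  classical
  set A := S.powerset.filter (fun D => IsGridClique S D ∧ C ⊆ D) with hA
  have hCA : C ∈ A := by
    simp only [hA, mem_filter, mem_powerset]
    exact ⟨h.2.1, h, subset_rfl⟩
  obtain ⟨D, hD, hDmax⟩ := A.exists_max_image Finset.card ⟨C, hCA⟩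
  simp only [hA, mem_filter, mem_powerset] at hD
  refine ⟨D, ⟨hD.2.1, ?_⟩, hD.2.2⟩
  intro C' hC' hsub
  refine Finset.eq_of_subset_of_card_le hsub (hDmax C' ?_)
  simp only [hA, mem_filter, mem_powerset]
  exact ⟨hC'.2.1, hC', hD.2.2.trans hsub⟩

/-- Anti-monotonicity: bigger row set ⇒ smaller column set, for maximal cliques. -/
lemma colsOf_subset_of_rows_subset {S D D' : Finset (Fin m × Fin n)}
    (hD : IsMaxClique S D) (hD' : IsMaxClique S D')
    (hsub : rowsOf D ⊆ rowsOf D') : colsOf D' ⊆ colsOf D := by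
  have hclique : IsGridClique S (rowsOf D ×ˢ (colsOf D ∪ colsOf D')) := by
    refine isGridClique_prod (rowsOf_nonempty hD.1)
      ((colsOf_nonempty hD.1).mono subset_union_left) ?_
    intro i hi j hj
    rcases mem_union.mp hj with hj | hj
    · exact hD.1.2.1 ((mem_gridClique hD.1).mpr ⟨hi, hj⟩)
    · exact hD'.1.2.1 ((mem_gridClique hD'.1).mpr ⟨hsub hi, hj⟩)
  have hDsub : D ⊆ rowsOf D ×ˢ (colsOf D ∪ colsOf D') := by
    intro p hp
    rw [mem_product]
    exact ⟨mem_image_of_mem _ hp, mem_union_left _ (mem_image_of_mem _ hp)⟩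
  have := hD.2 _ hclique hDsub
  intro j hj
  have hiD := rowsOf_nonempty hD.1
  obtain ⟨i, hi⟩ := hiD
  have : (i, j) ∈ D := by
    rw [this, mem_product]
    exact ⟨hi, mem_union_right _ hj⟩
  exact mem_image_of_mem _ this

lemma rowsOf_subset_of_cols_subset {S D D' : Finset (Fin m × Fin n)}
    (hD : IsMaxClique S D) (hD' : IsMaxClique S D')
    (hsub : colsOf D ⊆ colsOf D') : rowsOf D' ⊆ rowsOf D := by
  have hclique : IsGridClique S ((rowsOf D ∪ rowsOf D') ×ˢ colsOf D) := by
    refine isGridClique_prod ((rowsOf_nonempty hD.1).mono subset_union_left)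
      (colsOf_nonempty hD.1) ?_
    intro i hi j hj
    rcases mem_union.mp hi with hi | hi
    · exact hD.1.2.1 ((mem_gridClique hD.1).mpr ⟨hi, hj⟩)
    · exact hD'.1.2.1 ((mem_gridClique hD'.1).mpr ⟨hi, hsub hj⟩)
  have hDsub : D ⊆ (rowsOf D ∪ rowsOf D') ×ˢ colsOf D := by
    intro p hp
    rw [mem_product]
    exact ⟨mem_union_left _ (mem_image_of_mem _ hp), mem_image_of_mem _ hp⟩
  have := hD.2 _ hclique hDsub
  intro i hi
  obtain ⟨j, hj⟩ := colsOf_nonempty hD.1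
  have : (i, j) ∈ D := by
    rw [this, mem_product]
    exact ⟨mem_union_right _ hi, hj⟩
  exact mem_image_of_mem _ this

/-- Maximal cliques are determined by their row sets. -/
lemma maxClique_rows_inj {S D D' : Finset (Fin m × Fin n)}
    (hD : IsMaxClique S D) (hD' : IsMaxClique S D')
    (h : rowsOf D = rowsOf D') : D = D' := by
  have h1 := colsOf_subset_of_rows_subset hD hD' h.le
  have h2 := colsOf_subset_of_rows_subset hD' hD h.ge
  have hc : colsOf D = colsOf D' := le_antisymm h2 h1
  rw [gridClique_eq_prod hD.1, gridClique_eq_prod hD'.1, h, hc]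

set_option maxHeartbeats 1000000

lemma qiGraph_adj {S : Finset (Fin m × Fin n)} {a b : Fin m ⊕ Fin n} :
    (qiGraph m n S).Adj a b ↔
      (∃ i j, (i, j) ∈ S ∧ ((a = Sum.inl i ∧ b = Sum.inr j) ∨
        (a = Sum.inr j ∧ b = Sum.inl i))) := by
  rw [qiGraph, SimpleGraph.fromRel_adj]
  constructor
  · rintro ⟨hne, (⟨p, hp, rfl, rfl⟩ | ⟨p, hp, rfl, rfl⟩)⟩
    · exact ⟨p.1, p.2, hp, Or.inl ⟨rfl, rfl⟩⟩
    · exact ⟨p.1, p.2, hp, Or.inr ⟨rfl, rfl⟩⟩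
  · rintro ⟨i, j, hij, (⟨rfl, rfl⟩ | ⟨rfl, rfl⟩)⟩
    · exact ⟨by simp, Or.inl ⟨(i, j), hij, rfl, rfl⟩⟩
    · exact ⟨by simp, Or.inr ⟨(i, j), hij, rfl, rfl⟩⟩

lemma qiGraph_adj_inl_inr {S : Finset (Fin m × Fin n)} {i : Fin m} {j : Fin n} :
    (qiGraph m n S).Adj (Sum.inl i) (Sum.inr j) ↔ (i, j) ∈ S := by
  rw [qiGraph_adj]
  constructor
  · rintro ⟨i', j', h, (⟨h1, h2⟩ | ⟨h1, h2⟩)⟩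
    · simp only [Sum.inl.injEq, Sum.inr.injEq] at h1 h2; rwa [h1, h2]
    · exact absurd h1 (by simp)
  · exact fun h => ⟨i, j, h, Or.inl ⟨rfl, rfl⟩⟩

lemma qiGraph_adj_inr_inl {S : Finset (Fin m × Fin n)} {i : Fin m} {j : Fin n} :
    (qiGraph m n S).Adj (Sum.inr j) (Sum.inl i) ↔ (i, j) ∈ S := by
  rw [SimpleGraph.adj_comm]; exact qiGraph_adj_inl_inr

lemma qiGraph_not_adj_inl {S : Finset (Fin m × Fin n)} {i i' : Fin m} :
    ¬ (qiGraph m n S).Adj (Sum.inl i) (Sum.inl i') := by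
  rw [qiGraph_adj]; rintro ⟨a, b, -, (⟨-, h⟩ | ⟨h, -⟩)⟩ <;> exact absurd h (by simp)

lemma qiGraph_not_adj_inr {S : Finset (Fin m × Fin n)} {j j' : Fin n} :
    ¬ (qiGraph m n S).Adj (Sum.inr j) (Sum.inr j') := by
  rw [qiGraph_adj]; rintro ⟨a, b, -, (⟨h, -⟩ | ⟨-, h⟩)⟩ <;> exact absurd h (by simp)

/-- The key six-cycle argument: given the configuration with exactly one chord,
doubly chordal bipartite gives a contradiction. -/
lemma six_cycle_contradiction {S : Finset (Fin m × Fin n)}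
    (hS : DoublyChordalBipartite (qiGraph m n S))
    {r r₁ r₂ : Fin m} {j₀ j₁ j₂ : Fin n}
    (hrr₁ : r ≠ r₁) (hrr₂ : r ≠ r₂) (hr₁r₂ : r₁ ≠ r₂)
    (hj₀j₁ : j₀ ≠ j₁) (hj₀j₂ : j₀ ≠ j₂) (hj₁j₂ : j₁ ≠ j₂)
    (h10 : (r₁, j₀) ∈ S) (h20 : (r₂, j₀) ∈ S) (h22 : (r₂, j₂) ∈ S)
    (hr2 : (r, j₂) ∈ S) (hr1 : (r, j₁) ∈ S) (h11 : (r₁, j₁) ∈ S)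
    (h12 : (r₁, j₂) ∉ S) (h21 : (r₂, j₁) ∉ S) : False := by
  set G := qiGraph m n S with hG
  have a1 : G.Adj (Sum.inl r₁) (Sum.inr j₀) := qiGraph_adj_inl_inr.mpr h10
  have a2 : G.Adj (Sum.inr j₀) (Sum.inl r₂) := qiGraph_adj_inr_inl.mpr h20
  have a3 : G.Adj (Sum.inl r₂) (Sum.inr j₂) := qiGraph_adj_inl_inr.mpr h22
  have a4 : G.Adj (Sum.inr j₂) (Sum.inl r) := qiGraph_adj_inr_inl.mpr hr2
  have a5 : G.Adj (Sum.inl r) (Sum.inr j₁) := qiGraph_adj_inl_inr.mpr hr1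
  have a6 : G.Adj (Sum.inr j₁) (Sum.inl r₁) := qiGraph_adj_inr_inl.mpr h11
  set c : G.Walk (Sum.inl r₁) (Sum.inl r₁) :=
    .cons a1 (.cons a2 (.cons a3 (.cons a4 (.cons a5 (.cons a6 .nil))))) with hc
  have hcyc : c.IsCycle := by
    constructor
    · constructor
      · rw [SimpleGraph.Walk.isTrail_def, hc]
        simp only [SimpleGraph.Walk.edges_cons, SimpleGraph.Walk.edges_nil]
        simp [List.nodup_cons, Sym2.eq_iff, hrr₁, hrr₂, hr₁r₂, hj₀j₁, hj₀j₂, hj₁j₂,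
          Ne.symm hrr₁, Ne.symm hrr₂, Ne.symm hr₁r₂, Ne.symm hj₀j₁, Ne.symm hj₀j₂,
          Ne.symm hj₁j₂]
      · simp [hc]
    · rw [hc]
      simp only [SimpleGraph.Walk.support_cons, SimpleGraph.Walk.support_nil, List.tail_cons]
      simp [List.nodup_cons, hrr₁, hrr₂, hr₁r₂, hj₀j₁, hj₀j₂, hj₁j₂,
        Ne.symm hrr₁, Ne.symm hrr₂, Ne.symm hr₁r₂, Ne.symm hj₀j₁, Ne.symm hj₀j₂,
        Ne.symm hj₁j₂]
  have hlen : 6 ≤ c.length := by simp [hc]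
  obtain ⟨e₁, e₂, hne, hch₁, hch₂⟩ := hS _ c hcyc hlen
  have key : ∀ e, IsChord G c e → e = s(Sum.inl r, Sum.inr j₀) := by
    intro e he
    obtain ⟨hadj, hnotedge, hsupp⟩ := he
    induction e with
    | _ a b =>
    have ha : a ∈ c.support := hsupp a (Sym2.mem_mk_left a b)
    have hb : b ∈ c.support := hsupp b (Sym2.mem_mk_right a b)
    rw [hc] at ha hb
    simp only [SimpleGraph.Walk.support_cons, SimpleGraph.Walk.support_nil,
      List.mem_cons, List.not_mem_nil, or_false] at ha hb
    rw [SimpleGraph.mem_edgeSet] at hadj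
    rw [hc] at hnotedge
    simp only [SimpleGraph.Walk.edges_cons, SimpleGraph.Walk.edges_nil, List.mem_cons,
      List.not_mem_nil, or_false, not_or] at hnotedge
    rcases ha with rfl | rfl | rfl | rfl | rfl | rfl | rfl <;>
      rcases hb with rfl | rfl | rfl | rfl | rfl | rfl | rfl <;>
      first
        | exact absurd hadj (qiGraph_not_adj_inl)
        | exact absurd hadj (qiGraph_not_adj_inr)
        | rfl
        | exact Sym2.eq_swap
        | exact absurd rfl hnotedge.1
        | exact absurd rfl hnotedge.2.1
        | exact absurd rfl hnotedge.2.2.1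
        | exact absurd rfl hnotedge.2.2.2.1
        | exact absurd rfl hnotedge.2.2.2.2.1
        | exact absurd rfl hnotedge.2.2.2.2.2
        | exact absurd Sym2.eq_swap hnotedge.1
        | exact absurd Sym2.eq_swap hnotedge.2.1
        | exact absurd Sym2.eq_swap hnotedge.2.2.1
        | exact absurd Sym2.eq_swap hnotedge.2.2.2.1
        | exact absurd Sym2.eq_swap hnotedge.2.2.2.2.1
        | exact absurd Sym2.eq_swap hnotedge.2.2.2.2.2
        | exact absurd (qiGraph_adj_inl_inr.mp hadj) h12
        | exact absurd (qiGraph_adj_inl_inr.mp hadj) h21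
        | exact absurd (qiGraph_adj_inr_inl.mp hadj) h12
        | exact absurd (qiGraph_adj_inr_inl.mp hadj) h21
  exact hne ((key _ hch₁).trans (key _ hch₂).symm)

lemma exists_nonedge_of_not_mem_rows {S D : Finset (Fin m × Fin n)}
    (hD : IsMaxClique S D) {i : Fin m} (hi : i ∉ rowsOf D) :
    ∃ j ∈ colsOf D, (i, j) ∉ S := by
  by_contra h
  push_neg at h
  have hclique : IsGridClique S ((rowsOf D ∪ {i}) ×ˢ colsOf D) := by
    refine isGridClique_prod ((rowsOf_nonempty hD.1).mono subset_union_left)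
      (colsOf_nonempty hD.1) ?_
    intro i' hi' j hj
    rcases mem_union.mp hi' with hi' | hi'
    · exact hD.1.2.1 ((mem_gridClique hD.1).mpr ⟨hi', hj⟩)
    · rw [mem_singleton] at hi'; subst hi'; exact h j hj
  have hsub : D ⊆ (rowsOf D ∪ {i}) ×ˢ colsOf D := by
    intro p hp
    rw [mem_product]
    exact ⟨mem_union_left _ (mem_image_of_mem _ hp), mem_image_of_mem _ hp⟩
  have heq := hD.2 _ hclique hsub
  apply hi
  obtain ⟨j, hj⟩ := colsOf_nonempty hD.1
  have : (i, j) ∈ D := by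
    rw [heq, mem_product]
    exact ⟨mem_union_right _ (mem_singleton_self i), hj⟩
  exact mem_image_of_mem _ this

/-- **Laminarity**: the row sets of maximal cliques through a common column form a
laminar family. -/
lemma rows_laminar {S : Finset (Fin m × Fin n)}
    (hS : DoublyChordalBipartite (qiGraph m n S)) {D D' : Finset (Fin m × Fin n)}
    (hD : IsMaxClique S D) (hD' : IsMaxClique S D') {j₀ : Fin n}
    (hj : j₀ ∈ colsOf D) (hj' : j₀ ∈ colsOf D')
    (hmeet : (rowsOf D ∩ rowsOf D').Nonempty) :
    rowsOf D ⊆ rowsOf D' ∨ rowsOf D' ⊆ rowsOf D := by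
  by_contra hcon
  push_neg at hcon
  obtain ⟨h1, h2⟩ := hcon
  obtain ⟨r₁, hr₁D, hr₁D'⟩ := not_subset.mp h1
  obtain ⟨r₂, hr₂D', hr₂D⟩ := not_subset.mp h2
  obtain ⟨r, hr⟩ := hmeet
  rw [mem_inter] at hr
  obtain ⟨j₁, hj₁D, hj₁S⟩ := exists_nonedge_of_not_mem_rows hD hr₂D
  obtain ⟨j₂, hj₂D', hj₂S⟩ := exists_nonedge_of_not_mem_rows hD' hr₁D'
  have h10 : (r₁, j₀) ∈ S := hD.1.2.1 ((mem_gridClique hD.1).mpr ⟨hr₁D, hj⟩)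
  have h20 : (r₂, j₀) ∈ S := hD'.1.2.1 ((mem_gridClique hD'.1).mpr ⟨hr₂D', hj'⟩)
  have h22 : (r₂, j₂) ∈ S := hD'.1.2.1 ((mem_gridClique hD'.1).mpr ⟨hr₂D', hj₂D'⟩)
  have hrj2 : (r, j₂) ∈ S := hD'.1.2.1 ((mem_gridClique hD'.1).mpr ⟨hr.2, hj₂D'⟩)
  have hrj1 : (r, j₁) ∈ S := hD.1.2.1 ((mem_gridClique hD.1).mpr ⟨hr.1, hj₁D⟩)
  have h11 : (r₁, j₁) ∈ S := hD.1.2.1 ((mem_gridClique hD.1).mpr ⟨hr₁D, hj₁D⟩)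
  exact six_cycle_contradiction hS
    (by rintro rfl; exact hr₁D' hr.2) (by rintro rfl; exact hr₂D hr.1)
    (by rintro rfl; exact hr₂D hr₁D)
    (by rintro rfl; exact hj₁S h20) (by rintro rfl; exact hj₂S h10)
    (by rintro rfl; exact hj₂S h11)
    h10 h20 h22 hrj2 hrj1 h11 hj₂S hj₁S

/-- Maximal cliques of `S` meeting column `j₀`. -/
noncomputable def colCliques (S : Finset (Fin m × Fin n)) (j₀ : Fin n) :
    Finset (Finset (Fin m × Fin n)) :=
  (maxCliques S).filter (fun D => j₀ ∈ colsOf D)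

lemma mem_colCliques {S D : Finset (Fin m × Fin n)} {j₀ : Fin n} :
    D ∈ colCliques S j₀ ↔ IsMaxClique S D ∧ j₀ ∈ colsOf D := by
  simp [colCliques, mem_filter, mem_maxCliques]

lemma colClique_isMax {S D : Finset (Fin m × Fin n)} {j₀ : Fin n}
    (h : D ∈ colCliques S j₀) : IsMaxClique S D := (mem_colCliques.mp h).1

/-- Comparability of row sets of column cliques that share a row. -/
lemma colClique_comparable {S : Finset (Fin m × Fin n)}
    (hS : DoublyChordalBipartite (qiGraph m n S)) {j₀ : Fin n}
    {D D' : Finset (Fin m × Fin n)} (hD : D ∈ colCliques S j₀)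
    (hD' : D' ∈ colCliques S j₀) {i : Fin m} (hi : i ∈ rowsOf D) (hi' : i ∈ rowsOf D') :
    rowsOf D ⊆ rowsOf D' ∨ rowsOf D' ⊆ rowsOf D := by
  rw [mem_colCliques] at hD hD'
  exact rows_laminar hS hD.1 hD'.1 hD.2 hD'.2 ⟨i, mem_inter.mpr ⟨hi, hi'⟩⟩

/-- The strict-superset cliques of `D` in column `j₀`. -/
noncomputable def upsC (S : Finset (Fin m × Fin n)) (j₀ : Fin n)
    (D : Finset (Fin m × Fin n)) : Finset (Finset (Fin m × Fin n)) :=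
  (colCliques S j₀).filter (fun D' => rowsOf D ⊂ rowsOf D')

/-- The parent of `D` in the laminar forest. -/
noncomputable def parC (S : Finset (Fin m × Fin n)) (j₀ : Fin n)
    (D : Finset (Fin m × Fin n)) : Finset (Fin m × Fin n) :=
  if h : (upsC S j₀ D).Nonempty then
    ((upsC S j₀ D).exists_min_image (fun D' => (rowsOf D').card) h).choose
  else ∅

lemma parC_mem {S : Finset (Fin m × Fin n)} {j₀ : Fin n} {D : Finset (Fin m × Fin n)}
    (h : (upsC S j₀ D).Nonempty) :
    parC S j₀ D ∈ upsC S j₀ D ∧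
      ∀ D' ∈ upsC S j₀ D, (rowsOf (parC S j₀ D)).card ≤ (rowsOf D').card := by
  rw [parC, dif_pos h]
  obtain ⟨h1, h2⟩ := ((upsC S j₀ D).exists_min_image
    (fun D' => (rowsOf D').card) h).choose_spec
  exact ⟨h1, h2⟩

/-- Minimality of the parent w.r.t. row containment. -/
lemma parC_min {S : Finset (Fin m × Fin n)}
    (hS : DoublyChordalBipartite (qiGraph m n S)) {j₀ : Fin n}
    {D : Finset (Fin m × Fin n)} (hD : D ∈ colCliques S j₀)
    (h : (upsC S j₀ D).Nonempty) {D' : Finset (Fin m × Fin n)}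
    (hD' : D' ∈ upsC S j₀ D) : rowsOf (parC S j₀ D) ⊆ rowsOf D' := by
  obtain ⟨hmem, hmin⟩ := parC_mem h
  rw [upsC, mem_filter] at hmem hD'
  obtain ⟨i, hi⟩ := rowsOf_nonempty (colClique_isMax hD).1
  rcases colClique_comparable hS hmem.1 hD'.1 (hmem.2.1 hi) (hD'.2.1 hi) with hc | hc
  · exact hc
  · rw [Finset.eq_of_subset_of_card_le hc (hmin _ (mem_filter.mpr hD'))]

lemma parC_mem_colCliques {S : Finset (Fin m × Fin n)} {j₀ : Fin n}
    {D : Finset (Fin m × Fin n)} (h : (upsC S j₀ D).Nonempty) :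
    parC S j₀ D ∈ colCliques S j₀ ∧ rowsOf D ⊂ rowsOf (parC S j₀ D) := by
  have := (parC_mem h).1
  rw [upsC, mem_filter] at this
  exact this

lemma cliqueSum_prod_rows (u : Fin m × Fin n → ℝ) (R : Finset (Fin m)) (T : Finset (Fin n)) :
    cliqueSum u (R ×ˢ T) = ∑ i ∈ R, cliqueSum u ({i} ×ˢ T) := by
  simp [cliqueSum, Finset.sum_product]

lemma rowMarg_eq_cliqueSum (S : Finset (Fin m × Fin n)) (u : Fin m × Fin n → ℝ) (i : Fin m) :
    rowMarg S u i = cliqueSum u ({i} ×ˢ Finset.univ.filter (fun j => (i, j) ∈ S)) := by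
  rw [rowMarg, cliqueSum]
  apply Finset.sum_congr _ (fun _ _ => rfl)
  ext ⟨a, b⟩
  simp only [mem_filter, mem_product, mem_singleton, mem_univ, true_and]
  constructor
  · rintro ⟨h1, rfl⟩; exact ⟨rfl, h1⟩
  · rintro ⟨rfl, h2⟩; exact ⟨h2, rfl⟩

lemma inter_eq_prod {S D E : Finset (Fin m × Fin n)} (hD : IsMaxClique S D)
    (hE : IsMaxClique S E) (h : rowsOf D ⊆ rowsOf E) :
    D ∩ E = rowsOf D ×ˢ colsOf E := by
  have hc := colsOf_subset_of_rows_subset hD hE h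
  ext ⟨i, j⟩
  rw [mem_inter, mem_gridClique hD.1, mem_gridClique hE.1, mem_product]
  constructor
  · rintro ⟨⟨h1, -⟩, ⟨-, h4⟩⟩; exact ⟨h1, h4⟩
  · rintro ⟨h1, h2⟩; exact ⟨⟨h1, hc h2⟩, ⟨h h1, h2⟩⟩

noncomputable def belowC (S : Finset (Fin m × Fin n)) (j₀ : Fin n) (i : Fin m)
    (E : Finset (Fin m × Fin n)) : Finset (Finset (Fin m × Fin n)) :=
  (colCliques S j₀).filter (fun D => i ∈ rowsOf D ∧ rowsOf D ⊂ rowsOf E)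

noncomputable def offchC (S : Finset (Fin m × Fin n)) (j₀ : Fin n) (i : Fin m)
    (E : Finset (Fin m × Fin n)) : Finset (Finset (Fin m × Fin n)) :=
  (colCliques S j₀).filter (fun D => rowsOf D ⊆ rowsOf E ∧ i ∉ rowsOf D)

noncomputable def subC (S : Finset (Fin m × Fin n)) (j₀ : Fin n)
    (E : Finset (Fin m × Fin n)) : Finset (Finset (Fin m × Fin n)) :=
  (colCliques S j₀).filter (fun D => rowsOf D ⊆ rowsOf E)

/-- If there is nothing in the chain of `i` strictly below `E`, then the columns of
row `i` are exactly the columns of `E`. -/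
lemma cols_eq_of_no_below {S : Finset (Fin m × Fin n)}
    (hS : DoublyChordalBipartite (qiGraph m n S)) {j₀ : Fin n}
    {E : Finset (Fin m × Fin n)} (hE : E ∈ colCliques S j₀) {i : Fin m}
    (hi : i ∈ rowsOf E) (hb : belowC S j₀ i E = ∅) :
    Finset.univ.filter (fun j => (i, j) ∈ S) = colsOf E := by
  rw [mem_colCliques] at hE
  have hij₀ : (i, j₀) ∈ S := hE.1.1.2.1 ((mem_gridClique hE.1.1).mpr ⟨hi, hE.2⟩)
  set Ni := Finset.univ.filter (fun j => (i, j) ∈ S) with hNi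
  have hj₀Ni : j₀ ∈ Ni := by simp [hNi, hij₀]
  have hclique : IsGridClique S ({i} ×ˢ Ni) := by
    refine isGridClique_prod (singleton_nonempty i) ⟨j₀, hj₀Ni⟩ ?_
    intro a ha j hj
    rw [mem_singleton] at ha; subst ha
    simpa [hNi] using hj
  obtain ⟨Dh, hDh, hsub⟩ := exists_maxClique_superset hclique
  have hmemDh : (i, j₀) ∈ Dh := hsub (mem_product.mpr ⟨mem_singleton_self i, hj₀Ni⟩)
  have hiDh : i ∈ rowsOf Dh := mem_image_of_mem Prod.fst hmemDh
  have hNisub : Ni ⊆ colsOf Dh := by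
    intro j hj
    have hmem : (i, j) ∈ Dh := hsub (mem_product.mpr ⟨mem_singleton_self i, hj⟩)
    exact mem_image_of_mem Prod.snd hmem
  have hDhcol : Dh ∈ colCliques S j₀ := mem_colCliques.mpr ⟨hDh, hNisub hj₀Ni⟩
  have hcolsE : colsOf E ⊆ Ni := by
    intro j hj
    simp only [hNi, mem_filter, mem_univ, true_and]
    exact hE.1.1.2.1 ((mem_gridClique hE.1.1).mpr ⟨hi, hj⟩)
  have hrows : rowsOf Dh ⊆ rowsOf E :=
    rowsOf_subset_of_cols_subset hE.1 hDh (hcolsE.trans hNisub)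
  have heq : rowsOf Dh = rowsOf E := by
    by_contra hne
    have : Dh ∈ belowC S j₀ i E := by
      rw [belowC, mem_filter]
      exact ⟨hDhcol, hiDh, ssubset_of_subset_of_ne hrows hne⟩
    rw [hb] at this
    exact absurd this (notMem_empty _)
  have : Dh = E := maxClique_rows_inj hDh hE.1 heq
  subst this
  exact le_antisymm hNisub hcolsE

noncomputable def childrenC (S : Finset (Fin m × Fin n)) (j₀ : Fin n)
    (E : Finset (Fin m × Fin n)) : Finset (Finset (Fin m × Fin n)) :=
  (colCliques S j₀).filter (fun D => rowsOf D ⊂ rowsOf E ∧ parC S j₀ D = E)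

lemma rows_ssubset_of_subset_ne {S : Finset (Fin m × Fin n)} {j₀ : Fin n}
    {D E : Finset (Fin m × Fin n)} (hD : D ∈ colCliques S j₀) (hE : E ∈ colCliques S j₀)
    (hsub : rowsOf D ⊆ rowsOf E) (hne : D ≠ E) : rowsOf D ⊂ rowsOf E :=
  ssubset_of_subset_of_ne hsub
    (fun h => hne (maxClique_rows_inj (colClique_isMax hD) (colClique_isMax hE) h))

/-- Every row of `E` with nonempty chain below `E` lies in a child of `E`. -/
lemma exists_child {S : Finset (Fin m × Fin n)}
    (hS : DoublyChordalBipartite (qiGraph m n S)) {j₀ : Fin n}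
    {E : Finset (Fin m × Fin n)} (hE : E ∈ colCliques S j₀) {i : Fin m}
    (hb : (belowC S j₀ i E).Nonempty) :
    ∃ c ∈ childrenC S j₀ E, i ∈ rowsOf c := by
  obtain ⟨c, hc, hcmax⟩ := (belowC S j₀ i E).exists_max_image
    (fun D => (rowsOf D).card) hb
  rw [belowC, mem_filter] at hc
  obtain ⟨hccol, hic, hcss⟩ := hc
  have hups : (upsC S j₀ c).Nonempty := ⟨E, by rw [upsC, mem_filter]; exact ⟨hE, hcss⟩⟩
  have hparsub : rowsOf (parC S j₀ c) ⊆ rowsOf E :=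
    parC_min hS hccol hups (by rw [upsC, mem_filter]; exact ⟨hE, hcss⟩)
  obtain ⟨hparcol, hparss⟩ := parC_mem_colCliques (D := c) hups
  have hpar : parC S j₀ c = E := by
    apply maxClique_rows_inj (colClique_isMax hparcol) (colClique_isMax hE)
    by_contra hne
    have hss : rowsOf (parC S j₀ c) ⊂ rowsOf E := ssubset_of_subset_of_ne hparsub hne
    have : parC S j₀ c ∈ belowC S j₀ i E := by
      rw [belowC, mem_filter]
      exact ⟨hparcol, hparss.subset hic, hss⟩
    have hle := hcmax _ this
    exact absurd (Finset.card_lt_card hparss) (not_lt.mpr hle)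
  exact ⟨c, by rw [childrenC, mem_filter]; exact ⟨hccol, hcss, hpar⟩, hic⟩

lemma children_pairwiseDisjoint {S : Finset (Fin m × Fin n)}
    (hS : DoublyChordalBipartite (qiGraph m n S)) {j₀ : Fin n}
    {E : Finset (Fin m × Fin n)} :
    (↑(childrenC S j₀ E) : Set (Finset (Fin m × Fin n))).PairwiseDisjoint rowsOf := by
  intro c hc c' hc' hne
  simp only [Finset.mem_coe, childrenC, mem_filter] at hc hc'
  show Disjoint (rowsOf c) (rowsOf c')
  rw [Finset.disjoint_left]
  intro i hic hic'
  have key : ∀ a b : Finset (Fin m × Fin n),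
      a ∈ colCliques S j₀ → b ∈ colCliques S j₀ → rowsOf a ⊂ rowsOf b →
      parC S j₀ a = E → rowsOf b ⊂ rowsOf E → False := by
    intro a b ha hb hab hpar hbE
    have hups : (upsC S j₀ a).Nonempty := ⟨b, by rw [upsC, mem_filter]; exact ⟨hb, hab⟩⟩
    have := parC_min hS ha hups (D' := b) (by rw [upsC, mem_filter]; exact ⟨hb, hab⟩)
    rw [hpar] at this
    exact hbE.not_subset this
  rcases colClique_comparable hS hc.1 hc'.1 hic hic' with hcomp | hcomp
  · exact key c c' hc.1 hc'.1 (rows_ssubset_of_subset_ne hc.1 hc'.1 hcomp hne)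
      hc.2.2 hc'.2.1
  · exact key c' c hc'.1 hc.1 (rows_ssubset_of_subset_ne hc'.1 hc.1 hcomp (Ne.symm hne))
      hc'.2.2 hc.2.1

lemma child_mem_below {S : Finset (Fin m × Fin n)} {j₀ : Fin n}
    {E c : Finset (Fin m × Fin n)} (hc : c ∈ childrenC S j₀ E) {i : Fin m}
    (hi : i ∈ rowsOf c) : c ∈ belowC S j₀ i E := by
  rw [childrenC, mem_filter] at hc
  rw [belowC, mem_filter]
  exact ⟨hc.1, hi, hc.2.1⟩

/-- For `i` in a child `c` of `E`: the chain below `E` is the chain below `c` plus `c`. -/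
lemma below_eq_insert {S : Finset (Fin m × Fin n)}
    (hS : DoublyChordalBipartite (qiGraph m n S)) {j₀ : Fin n}
    {E c : Finset (Fin m × Fin n)} (hc : c ∈ childrenC S j₀ E) {i : Fin m}
    (hi : i ∈ rowsOf c) :
    belowC S j₀ i E = insert c (belowC S j₀ i c) ∧ c ∉ belowC S j₀ i c := by
  rw [childrenC, mem_filter] at hc
  obtain ⟨hccol, hcss, hpar⟩ := hc
  constructor
  · ext D
    rw [mem_insert, belowC, belowC, mem_filter, mem_filter]
    constructor
    · rintro ⟨hDcol, hiD, hDE⟩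
      by_cases hDc : D = c
      · exact Or.inl hDc
      · rcases colClique_comparable hS hDcol hccol hiD hi with hcomp | hcomp
        · exact Or.inr ⟨hDcol, hiD, rows_ssubset_of_subset_ne hDcol hccol hcomp hDc⟩
        · exfalso
          have hss : rowsOf c ⊂ rowsOf D :=
            rows_ssubset_of_subset_ne hccol hDcol hcomp (Ne.symm hDc)
          have hups : (upsC S j₀ c).Nonempty :=
            ⟨D, by rw [upsC, mem_filter]; exact ⟨hDcol, hss⟩⟩
          have := parC_min hS hccol hups (D' := D)
            (by rw [upsC, mem_filter]; exact ⟨hDcol, hss⟩)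
          rw [hpar] at this
          exact hDE.not_subset this
    · rintro (rfl | ⟨hDcol, hiD, hDc⟩)
      · exact ⟨hccol, hi, hcss⟩
      · exact ⟨hDcol, hiD, hDc.trans hcss⟩
  · rw [belowC, mem_filter]
    rintro ⟨-, -, hss⟩
    exact hss.ne rfl

/-- For `i` in a child `c` of `E`: decomposition of the off-chain cliques. -/
lemma offch_eq_union {S : Finset (Fin m × Fin n)}
    (hS : DoublyChordalBipartite (qiGraph m n S)) {j₀ : Fin n}
    {E c : Finset (Fin m × Fin n)} (hE : E ∈ colCliques S j₀) (hc : c ∈ childrenC S j₀ E)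
    {i : Fin m} (hi : i ∈ rowsOf c) :
    offchC S j₀ i E = offchC S j₀ i c ∪ ((subC S j₀ E \ subC S j₀ c).erase E) ∧
      Disjoint (offchC S j₀ i c) ((subC S j₀ E \ subC S j₀ c).erase E) := by
  rw [childrenC, mem_filter] at hc
  obtain ⟨hccol, hcss, hpar⟩ := hc
  constructor
  · ext D
    rw [mem_union, mem_erase, mem_sdiff, offchC, offchC, subC, subC,
      mem_filter, mem_filter, mem_filter, mem_filter]
    constructor
    · rintro ⟨hDcol, hDE, hiD⟩
      by_cases hDc : rowsOf D ⊆ rowsOf c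
      · exact Or.inl ⟨hDcol, hDc, hiD⟩
      · refine Or.inr ⟨?_, ⟨hDcol, hDE⟩, fun h => hDc h.2⟩
        rintro rfl
        exact hiD (hcss.subset hi)
    · rintro (⟨hDcol, hDc, hiD⟩ | ⟨hDne, ⟨⟨hDcol, hDE⟩, hnotc⟩⟩)
      · exact ⟨hDcol, hDc.trans hcss.subset, hiD⟩
      · refine ⟨hDcol, hDE, fun hiD => ?_⟩
        have hDc : ¬ rowsOf D ⊆ rowsOf c := fun h => hnotc ⟨hDcol, h⟩
        rcases colClique_comparable hS hDcol hccol hiD hi with hcomp | hcomp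
        · exact hDc hcomp
        · have hss : rowsOf c ⊂ rowsOf D := ssubset_of_subset_of_ne hcomp
            (fun h => hDc h.ge)
          have hups : (upsC S j₀ c).Nonempty :=
            ⟨D, by rw [upsC, mem_filter]; exact ⟨hDcol, hss⟩⟩
          have hmin := parC_min hS hccol hups (D' := D)
            (by rw [upsC, mem_filter]; exact ⟨hDcol, hss⟩)
          rw [hpar] at hmin
          exact hDne (maxClique_rows_inj (colClique_isMax hDcol)
            (colClique_isMax hE) (le_antisymm hDE hmin))
  · rw [Finset.disjoint_left]
    intro D hD hD'
    rw [offchC, mem_filter] at hD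
    rw [mem_erase, mem_sdiff] at hD'
    exact hD'.2.2 (by rw [subC, mem_filter]; exact ⟨hD.1, hD.2.1⟩)

/-- Decomposition of `subC E` via a child. -/
lemma subE_erase_eq {S : Finset (Fin m × Fin n)} {j₀ : Fin n}
    {E c : Finset (Fin m × Fin n)} (hc : c ∈ childrenC S j₀ E) :
    (subC S j₀ E).erase E = subC S j₀ c ∪ ((subC S j₀ E \ subC S j₀ c).erase E) ∧
      Disjoint (subC S j₀ c) ((subC S j₀ E \ subC S j₀ c).erase E) ∧
      E ∉ subC S j₀ c := by
  rw [childrenC, mem_filter] at hc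
  obtain ⟨hccol, hcss, -⟩ := hc
  have hEc : E ∉ subC S j₀ c := by
    rw [subC, mem_filter]
    rintro ⟨-, h⟩
    exact hcss.not_subset h
  refine ⟨?_, ?_, hEc⟩
  · ext D
    rw [mem_erase, mem_union, mem_erase, mem_sdiff]
    constructor
    · rintro ⟨hne, hD⟩
      by_cases hDc : D ∈ subC S j₀ c
      · exact Or.inl hDc
      · exact Or.inr ⟨hne, hD, hDc⟩
    · rintro (hD | ⟨hne, hD, -⟩)
      · refine ⟨fun h => hEc (h ▸ hD), ?_⟩
        rw [subC, mem_filter] at hD ⊢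
        exact ⟨hD.1, hD.2.trans hcss.subset⟩
      · exact ⟨hne, hD⟩
  · rw [Finset.disjoint_left]
    intro D hD hD'
    rw [mem_erase, mem_sdiff] at hD'
    exact hD'.2.2 hD

/-- When the chain below `E` at `i` is empty, the off-chain cliques are everything
in `subC E` except `E`. -/
lemma offch_eq_of_no_below {S : Finset (Fin m × Fin n)} {j₀ : Fin n}
    {E : Finset (Fin m × Fin n)} (hE : E ∈ colCliques S j₀) {i : Fin m}
    (hi : i ∈ rowsOf E) (hb : belowC S j₀ i E = ∅) :
    offchC S j₀ i E = (subC S j₀ E).erase E := by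
  ext D
  rw [offchC, mem_filter, mem_erase, subC, mem_filter]
  constructor
  · rintro ⟨hDcol, hDE, hiD⟩
    exact ⟨fun h => hiD (h ▸ hi), hDcol, hDE⟩
  · rintro ⟨hne, hDcol, hDE⟩
    refine ⟨hDcol, hDE, fun hiD => ?_⟩
    have : D ∈ belowC S j₀ i E := by
      rw [belowC, mem_filter]
      exact ⟨hDcol, hiD, rows_ssubset_of_subset_ne hDcol hE hDE hne⟩
    rw [hb] at this
    exact absurd this (notMem_empty _)

/-- The main telescoping induction over the laminar forest. -/
lemma main_induction {S : Finset (Fin m × Fin n)}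
    (hS : DoublyChordalBipartite (qiGraph m n S)) (u : Fin m × Fin n → ℝ) {j₀ : Fin n} :
    ∀ N : ℕ, ∀ E ∈ colCliques S j₀, (rowsOf E).card ≤ N →
    ∑ i ∈ rowsOf E, rowMarg S u i *
        (∏ D ∈ belowC S j₀ i E, cliqueSum u (D ∩ parC S j₀ D)) *
        ∏ D ∈ offchC S j₀ i E, cliqueSum u D
      = ∏ D ∈ subC S j₀ E, cliqueSum u D := by
  intro N
  induction N with
  | zero =>
    intro E hE hcard
    have h1 := Finset.card_pos.mpr (rowsOf_nonempty (colClique_isMax hE).1)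
    omega
  | succ N ih =>
    intro E hE hcard
    set f : Fin m → ℝ := fun i => rowMarg S u i *
        (∏ D ∈ belowC S j₀ i E, cliqueSum u (D ∩ parC S j₀ D)) *
        ∏ D ∈ offchC S j₀ i E, cliqueSum u D with hf
    set R0 := (rowsOf E).filter (fun i => belowC S j₀ i E = ∅) with hR0
    set Ch := childrenC S j₀ E with hCh
    have hcover : rowsOf E = R0 ∪ Ch.biUnion rowsOf := by
      ext i
      simp only [hR0, hCh, mem_union, mem_filter, mem_biUnion]
      constructor
      · intro hi
        by_cases hb : belowC S j₀ i E = ∅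
        · exact Or.inl ⟨hi, hb⟩
        · exact Or.inr (exists_child hS hE (nonempty_iff_ne_empty.mpr hb))
      · rintro (⟨hi, -⟩ | ⟨c, hcc, hic⟩)
        · exact hi
        · rw [childrenC, mem_filter] at hcc
          exact hcc.2.1.subset hic
    have hdisj : Disjoint R0 (Ch.biUnion rowsOf) := by
      rw [Finset.disjoint_left]
      intro i hi hib
      rw [hR0, mem_filter] at hi
      rw [mem_biUnion] at hib
      obtain ⟨c, hcc, hic⟩ := hib
      have := child_mem_below hcc hic
      rw [hi.2] at this
      exact absurd this (notMem_empty _)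
    have hEsub : E ∈ subC S j₀ E := by
      rw [subC, mem_filter]; exact ⟨hE, subset_rfl⟩
    have hsumR0 : ∑ i ∈ R0, f i =
        cliqueSum u (R0 ×ˢ colsOf E) * ∏ D ∈ (subC S j₀ E).erase E, cliqueSum u D := by
      rw [cliqueSum_prod_rows, Finset.sum_mul]
      apply Finset.sum_congr rfl
      intro i hi
      rw [hR0, mem_filter] at hi
      rw [hf]
      simp only
      rw [rowMarg_eq_cliqueSum, cols_eq_of_no_below hS hE hi.1 hi.2, hi.2,
        offch_eq_of_no_below hE hi.1 hi.2, Finset.prod_empty, mul_one]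
    have hsumc : ∀ c ∈ Ch, ∑ i ∈ rowsOf c, f i =
        cliqueSum u (rowsOf c ×ˢ colsOf E) *
          ∏ D ∈ (subC S j₀ E).erase E, cliqueSum u D := by
      intro c hcc
      have hcc2 := hcc
      rw [hCh, childrenC, mem_filter] at hcc2
      obtain ⟨hccol, hcss, hpar⟩ := hcc2
      have hcardc : (rowsOf c).card ≤ N := by
        have h1 := Finset.card_lt_card hcss
        have h2 := Finset.card_le_card hcss.subset
        omega
      have hIH := ih c hccol hcardc
      obtain ⟨hsub_eq, hdisj2, hEnot⟩ := subE_erase_eq (hCh ▸ hcc)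
      have step1 : ∑ i ∈ rowsOf c, f i =
          (cliqueSum u (c ∩ E) *
            ∏ D ∈ (subC S j₀ E \ subC S j₀ c).erase E, cliqueSum u D) *
          ∑ i ∈ rowsOf c, (rowMarg S u i *
            (∏ D ∈ belowC S j₀ i c, cliqueSum u (D ∩ parC S j₀ D)) *
            ∏ D ∈ offchC S j₀ i c, cliqueSum u D) := by
        rw [Finset.mul_sum]
        apply Finset.sum_congr rfl
        intro i hi
        obtain ⟨hbeq, hcnot⟩ := below_eq_insert hS (hCh ▸ hcc) hi
        obtain ⟨hoeq, hodisj⟩ := offch_eq_union hS hE (hCh ▸ hcc) hi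
        rw [hf]
        simp only
        rw [hbeq, Finset.prod_insert hcnot, hoeq, Finset.prod_union hodisj, hpar]
        ring
      rw [step1, hIH,
        inter_eq_prod (colClique_isMax hccol) (colClique_isMax hE) hcss.subset]
      rw [hsub_eq, Finset.prod_union hdisj2]
      ring
    rw [hcover, Finset.sum_union hdisj, Finset.sum_biUnion (children_pairwiseDisjoint hS),
      hsumR0, Finset.sum_congr rfl hsumc, ← Finset.sum_mul, ← add_mul]
    have hadd : cliqueSum u (R0 ×ˢ colsOf E) +
        ∑ c ∈ Ch, cliqueSum u (rowsOf c ×ˢ colsOf E) = cliqueSum u E := by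
      conv_rhs => rw [gridClique_eq_prod (colClique_isMax hE).1]
      rw [cliqueSum_prod_rows u (rowsOf E), hcover, Finset.sum_union hdisj,
        Finset.sum_biUnion (children_pairwiseDisjoint hS), ← cliqueSum_prod_rows]
      congr 1
      exact Finset.sum_congr rfl (fun c _ => cliqueSum_prod_rows u (rowsOf c) (colsOf E))
    rw [hadd, Finset.mul_prod_erase _ _ hEsub]

lemma mem_maxCliquesAt {S D : Finset (Fin m × Fin n)} {i : Fin m} {j₀ : Fin n} :
    D ∈ maxCliquesAt S (i, j₀) ↔ D ∈ colCliques S j₀ ∧ i ∈ rowsOf D := by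
  rw [maxCliquesAt, mem_filter, mem_colCliques, mem_maxCliques]
  constructor
  · rintro ⟨hD, hmem⟩
    rw [mem_gridClique hD.1] at hmem
    exact ⟨⟨hD, hmem.2⟩, hmem.1⟩
  · rintro ⟨⟨hD, hj⟩, hi⟩
    exact ⟨hD, (mem_gridClique hD.1).mpr ⟨hi, hj⟩⟩

/-- Normal form for pairwise intersections along the chain. -/
lemma pairIntsAt_norm {S : Finset (Fin m × Fin n)}
    (hS : DoublyChordalBipartite (qiGraph m n S)) {i : Fin m} {j₀ : Fin n}
    {C : Finset (Fin m × Fin n)} (hC : C ∈ pairIntsAt S (i, j₀)) :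
    ∃ A B, A ∈ colCliques S j₀ ∧ B ∈ colCliques S j₀ ∧ i ∈ rowsOf A ∧ i ∈ rowsOf B ∧
      rowsOf A ⊂ rowsOf B ∧ C = A ∩ B := by
  rw [pairIntsAt, mem_image] at hC
  obtain ⟨⟨A, B⟩, hAB, hCint⟩ := hC
  rw [mem_filter, mem_product] at hAB
  obtain ⟨⟨hA, hB⟩, hne⟩ := hAB
  rw [mem_maxCliquesAt] at hA hB
  rcases colClique_comparable hS hA.1 hB.1 hA.2 hB.2 with hcomp | hcomp
  · exact ⟨A, B, hA.1, hB.1, hA.2, hB.2,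
      rows_ssubset_of_subset_ne hA.1 hB.1 hcomp hne, hCint.symm⟩
  · exact ⟨B, A, hB.1, hA.1, hB.2, hA.2,
      rows_ssubset_of_subset_ne hB.1 hA.1 hcomp (Ne.symm hne),
      by rw [← hCint, inter_comm]⟩

lemma consec_mem_pairIntsAt {S : Finset (Fin m × Fin n)} {i : Fin m} {j₀ : Fin n}
    {D : Finset (Fin m × Fin n)} (hD : D ∈ colCliques S j₀) (hiD : i ∈ rowsOf D)
    (hups : (upsC S j₀ D).Nonempty) :
    D ∩ parC S j₀ D ∈ pairIntsAt S (i, j₀) := by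
  obtain ⟨hpcol, hpss⟩ := parC_mem_colCliques hups
  rw [pairIntsAt, mem_image]
  refine ⟨(D, parC S j₀ D), ?_, rfl⟩
  rw [mem_filter, mem_product]
  refine ⟨⟨mem_maxCliquesAt.mpr ⟨hD, hiD⟩,
    mem_maxCliquesAt.mpr ⟨hpcol, hpss.subset hiD⟩⟩, ?_⟩
  intro h
  exact hpss.ne (congrArg rowsOf h)

/-- The containment-maximal pairwise intersections at `(i, j₀)` are exactly the
consecutive intersections `D ∩ par D` along the chain of `i`. -/
lemma maxIntsAt_eq_image {S : Finset (Fin m × Fin n)}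
    (hS : DoublyChordalBipartite (qiGraph m n S)) {i : Fin m} {j₀ : Fin n}
    {Etop : Finset (Fin m × Fin n)} (hEtop : Etop ∈ colCliques S j₀)
    (htop : ∀ D ∈ colCliques S j₀, rowsOf D ⊆ rowsOf Etop) :
    maxIntsAt S (i, j₀) =
      (belowC S j₀ i Etop).image (fun D => D ∩ parC S j₀ D) := by
  have hconsec_max : ∀ D ∈ belowC S j₀ i Etop,
      ∀ C' ∈ pairIntsAt S (i, j₀), D ∩ parC S j₀ D ⊆ C' → D ∩ parC S j₀ D = C' := by
    intro D hD C' hC' hsub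
    rw [belowC, mem_filter] at hD
    obtain ⟨hDcol, hiD, hDss⟩ := hD
    have hups : (upsC S j₀ D).Nonempty :=
      ⟨Etop, by rw [upsC, mem_filter]; exact ⟨hEtop, hDss⟩⟩
    obtain ⟨hpcol, hpss⟩ := parC_mem_colCliques hups
    obtain ⟨A, B, hA, hB, hiA, hiB, hABss, rfl⟩ := pairIntsAt_norm hS hC'
    rw [inter_eq_prod (colClique_isMax hDcol) (colClique_isMax hpcol) hpss.subset,
      inter_eq_prod (colClique_isMax hA) (colClique_isMax hB) hABss.subset] at hsub ⊢
    have hj₀p : j₀ ∈ colsOf (parC S j₀ D) := (mem_colCliques.mp hpcol).2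
    have hDA : rowsOf D ⊆ rowsOf A := by
      intro a ha
      have hmem : (a, j₀) ∈ rowsOf D ×ˢ colsOf (parC S j₀ D) :=
        mem_product.mpr ⟨ha, hj₀p⟩
      exact (mem_product.mp (hsub hmem)).1
    have hpB : colsOf (parC S j₀ D) ⊆ colsOf B := by
      intro b hb
      obtain ⟨a, ha⟩ := rowsOf_nonempty (colClique_isMax hDcol).1
      have hmem : (a, b) ∈ rowsOf D ×ˢ colsOf (parC S j₀ D) :=
        mem_product.mpr ⟨ha, hb⟩
      exact (mem_product.mp (hsub hmem)).2
    have hBp : rowsOf B ⊆ rowsOf (parC S j₀ D) :=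
      rowsOf_subset_of_cols_subset (colClique_isMax hpcol) (colClique_isMax hB) hpB
    have hDB : rowsOf D ⊂ rowsOf B := (Finset.ssubset_of_subset_of_ssubset hDA hABss)
    have hBups : B ∈ upsC S j₀ D := by rw [upsC, mem_filter]; exact ⟨hB, hDB⟩
    have hpB' : rowsOf (parC S j₀ D) ⊆ rowsOf B := parC_min hS hDcol hups hBups
    have hBeq : B = parC S j₀ D :=
      maxClique_rows_inj (colClique_isMax hB) (colClique_isMax hpcol)
        (le_antisymm hBp hpB')
    have hAeq : A = D := by
      apply maxClique_rows_inj (colClique_isMax hA) (colClique_isMax hDcol)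
      by_contra hne
      have hss : rowsOf D ⊂ rowsOf A := ssubset_of_subset_of_ne hDA (Ne.symm (fun h => hne h))
      have hAups : A ∈ upsC S j₀ D := by rw [upsC, mem_filter]; exact ⟨hA, hss⟩
      have := parC_min hS hDcol hups hAups
      rw [← hBeq] at this
      exact hABss.not_subset this
    rw [hAeq, hBeq]
  ext C
  rw [maxIntsAt, mem_filter, mem_image]
  constructor
  · rintro ⟨hCpair, hCmax⟩
    obtain ⟨A, B, hA, hB, hiA, hiB, hABss, rfl⟩ := pairIntsAt_norm hS hCpair
    have hAbelow : A ∈ belowC S j₀ i Etop := by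
      rw [belowC, mem_filter]
      exact ⟨hA, hiA, Finset.ssubset_of_ssubset_of_subset hABss (htop _ hB)⟩
    have hupsA : (upsC S j₀ A).Nonempty :=
      ⟨B, by rw [upsC, mem_filter]; exact ⟨hB, hABss⟩⟩
    obtain ⟨hpcol, hpss⟩ := parC_mem_colCliques hupsA
    have hsub : A ∩ B ⊆ A ∩ parC S j₀ A := by
      have h1 : rowsOf (parC S j₀ A) ⊆ rowsOf B := parC_min hS hA hupsA
        (by rw [upsC, mem_filter]; exact ⟨hB, hABss⟩)
      have h2 : colsOf B ⊆ colsOf (parC S j₀ A) :=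
        colsOf_subset_of_rows_subset (colClique_isMax hpcol) (colClique_isMax hB) h1
      rw [inter_eq_prod (colClique_isMax hA) (colClique_isMax hB) hABss.subset,
        inter_eq_prod (colClique_isMax hA) (colClique_isMax hpcol) hpss.subset]
      exact Finset.product_subset_product (subset_refl _) h2
    have := hCmax _ (consec_mem_pairIntsAt hA hiA hupsA) hsub
    exact ⟨A, hAbelow, this.symm⟩
  · rintro ⟨D, hD, rfl⟩
    have hD' := hD
    rw [belowC, mem_filter] at hD'
    obtain ⟨hDcol, hiD, hDss⟩ := hD'
    have hups : (upsC S j₀ D).Nonempty :=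
      ⟨Etop, by rw [upsC, mem_filter]; exact ⟨hEtop, hDss⟩⟩
    exact ⟨consec_mem_pairIntsAt hDcol hiD hups, hconsec_max D hD⟩

lemma rowsOf_prod_of_nonempty {R : Finset (Fin m)} {T : Finset (Fin n)}
    (hT : T.Nonempty) : rowsOf (R ×ˢ T) = R := by
  obtain ⟨j, hj⟩ := hT
  ext a
  simp only [rowsOf, mem_image, mem_product]
  constructor
  · rintro ⟨⟨p1, p2⟩, ⟨h1, -⟩, rfl⟩; exact h1
  · intro ha; exact ⟨(a, j), ⟨ha, hj⟩, rfl⟩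

lemma prod_maxIntsAt {S : Finset (Fin m × Fin n)}
    (hS : DoublyChordalBipartite (qiGraph m n S)) (u : Fin m × Fin n → ℝ)
    {i : Fin m} {j₀ : Fin n} {Etop : Finset (Fin m × Fin n)}
    (hEtop : Etop ∈ colCliques S j₀)
    (htop : ∀ D ∈ colCliques S j₀, rowsOf D ⊆ rowsOf Etop) :
    ∏ C ∈ maxIntsAt S (i, j₀), cliqueSum u C =
      ∏ D ∈ belowC S j₀ i Etop, cliqueSum u (D ∩ parC S j₀ D) := by
  rw [maxIntsAt_eq_image hS hEtop htop]
  apply Finset.prod_image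
  intro D hD D' hD' heq
  simp only [Finset.mem_coe, belowC, mem_filter] at hD hD'
  obtain ⟨hDcol, hiD, hDss⟩ := hD
  obtain ⟨hD'col, hiD', hD'ss⟩ := hD'
  have hups : (upsC S j₀ D).Nonempty :=
    ⟨Etop, by rw [upsC, mem_filter]; exact ⟨hEtop, hDss⟩⟩
  have hups' : (upsC S j₀ D').Nonempty :=
    ⟨Etop, by rw [upsC, mem_filter]; exact ⟨hEtop, hD'ss⟩⟩
  obtain ⟨hpcol, hpss⟩ := parC_mem_colCliques hups
  obtain ⟨hp'col, hp'ss⟩ := parC_mem_colCliques hups'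
  have e1 : D ∩ parC S j₀ D = rowsOf D ×ˢ colsOf (parC S j₀ D) :=
    inter_eq_prod (colClique_isMax hDcol) (colClique_isMax hpcol) hpss.subset
  have e2 : D' ∩ parC S j₀ D' = rowsOf D' ×ˢ colsOf (parC S j₀ D') :=
    inter_eq_prod (colClique_isMax hD'col) (colClique_isMax hp'col) hp'ss.subset
  have : rowsOf D = rowsOf D' := by
    have := congrArg rowsOf (e1 ▸ e2 ▸ (show D ∩ parC S j₀ D = D' ∩ parC S j₀ D' from heq))
    rwa [rowsOf_prod_of_nonempty (colsOf_nonempty (colClique_isMax hpcol).1),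
      rowsOf_prod_of_nonempty (colsOf_nonempty (colClique_isMax hp'col).1)] at this
  exact maxClique_rows_inj (colClique_isMax hDcol) (colClique_isMax hD'col) this

lemma exists_top {S : Finset (Fin m × Fin n)} {j₀ : Fin n}
    (hI : (Finset.univ.filter (fun i : Fin m => (i, j₀) ∈ S)).Nonempty) :
    ∃ E ∈ colCliques S j₀,
      rowsOf E = Finset.univ.filter (fun i : Fin m => (i, j₀) ∈ S) ∧
      ∀ D ∈ colCliques S j₀, rowsOf D ⊆ rowsOf E := by
  set I := Finset.univ.filter (fun i : Fin m => (i, j₀) ∈ S) with hIdef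
  have hclique : IsGridClique S (I ×ˢ {j₀}) := by
    refine isGridClique_prod hI (singleton_nonempty j₀) ?_
    intro i hi j hj
    rw [mem_singleton] at hj; subst hj
    rw [hIdef, mem_filter] at hi
    exact hi.2
  obtain ⟨E, hE, hsub⟩ := exists_maxClique_superset hclique
  obtain ⟨i0, hi0⟩ := hI
  have hmem0 : (i0, j₀) ∈ E := hsub (mem_product.mpr ⟨hi0, mem_singleton_self j₀⟩)
  have hj₀cols : j₀ ∈ colsOf E := mem_image_of_mem Prod.snd hmem0
  have hEc : E ∈ colCliques S j₀ := mem_colCliques.mpr ⟨hE, hj₀cols⟩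
  have hrowssub : ∀ D ∈ colCliques S j₀, rowsOf D ⊆ I := by
    intro D hD i hi
    rw [mem_colCliques] at hD
    rw [hIdef, mem_filter]
    exact ⟨mem_univ _, hD.1.1.2.1 ((mem_gridClique hD.1.1).mpr ⟨hi, hD.2⟩)⟩
  have hrows : rowsOf E = I := by
    apply le_antisymm (hrowssub E hEc)
    intro i hi
    have hmem : (i, j₀) ∈ E := hsub (mem_product.mpr ⟨hi, mem_singleton_self j₀⟩)
    exact mem_image_of_mem Prod.fst hmem
  exact ⟨E, hEc, hrows, fun D hD => (hrowssub D hD).trans hrows.ge⟩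

lemma sdiff_maxCliquesAt_split {S : Finset (Fin m × Fin n)} {j₀ : Fin n} {i : Fin m}
    {Etop : Finset (Fin m × Fin n)}
    (htop : ∀ D ∈ colCliques S j₀, rowsOf D ⊆ rowsOf Etop) :
    maxCliques S \ maxCliquesAt S (i, j₀) =
      (maxCliques S \ colCliques S j₀) ∪ offchC S j₀ i Etop ∧
      Disjoint (maxCliques S \ colCliques S j₀) (offchC S j₀ i Etop) := by
  constructor
  · ext D
    rw [mem_sdiff, mem_union, mem_sdiff, offchC, mem_filter]
    constructor
    · rintro ⟨hD, hnot⟩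
      by_cases hcol : D ∈ colCliques S j₀
      · refine Or.inr ⟨hcol, htop _ hcol, fun hi => hnot (mem_maxCliquesAt.mpr ⟨hcol, hi⟩)⟩
      · exact Or.inl ⟨hD, hcol⟩
    · rintro (⟨hD, hcol⟩ | ⟨hcol, -, hi⟩)
      · exact ⟨hD, fun h => hcol (mem_maxCliquesAt.mp h).1⟩
      · refine ⟨(mem_filter.mp hcol).1, fun h => hi (mem_maxCliquesAt.mp h).2⟩
  · rw [Finset.disjoint_left]
    intro D hD hD'
    rw [mem_sdiff] at hD
    rw [offchC, mem_filter] at hD'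
    exact hD.2 hD'.1

lemma subC_top_eq {S : Finset (Fin m × Fin n)} {j₀ : Fin n}
    {Etop : Finset (Fin m × Fin n)}
    (htop : ∀ D ∈ colCliques S j₀, rowsOf D ⊆ rowsOf Etop) :
    subC S j₀ Etop = colCliques S j₀ := by
  rw [subC]
  exact Finset.filter_true_of_mem htop

/-- for every column `j₀`,
`Σ_{i : (i,j₀) ∈ S} x_{i j₀} = u_{+j₀} · ∏_{D ∈ Max(S)} D⁺`. -/
theorem sum_entire_column (m n : ℕ) (S : Finset (Fin m × Fin n))
    (hS : DoublyChordalBipartite (qiGraph m n S)) (u : Fin m × Fin n → ℝ) (j₀ : Fin n) :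
    ∑ i ∈ Finset.univ.filter (fun i : Fin m => (i, j₀) ∈ S), xval S u (i, j₀) =
      colMarg S u j₀ * ∏ D ∈ maxCliques S, cliqueSum u D := by
  by_cases hIne : (Finset.univ.filter (fun i : Fin m => (i, j₀) ∈ S)).Nonempty
  · obtain ⟨Etop, hEtop, hrows, htop⟩ := exists_top hIne
    have hcolsub : colCliques S j₀ ⊆ maxCliques S := filter_subset _ _
    rw [← hrows]
    have hterm : ∀ i ∈ rowsOf Etop, xval S u (i, j₀) =
        colMarg S u j₀ * (∏ D ∈ maxCliques S \ colCliques S j₀, cliqueSum u D) *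
          (rowMarg S u i *
            (∏ D ∈ belowC S j₀ i Etop, cliqueSum u (D ∩ parC S j₀ D)) *
            ∏ D ∈ offchC S j₀ i Etop, cliqueSum u D) := by
      intro i hi
      obtain ⟨hsplit, hdisj⟩ := sdiff_maxCliquesAt_split (i := i) htop
      rw [xval]
      simp only
      rw [prod_maxIntsAt hS u hEtop htop, hsplit, Finset.prod_union hdisj]
      ring
    rw [Finset.sum_congr rfl hterm, ← Finset.mul_sum,
      main_induction hS u (rowsOf Etop).card Etop hEtop le_rfl,
      subC_top_eq htop, mul_assoc, Finset.prod_sdiff hcolsub]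
  · rw [not_nonempty_iff_eq_empty] at hIne
    rw [hIne, Finset.sum_empty]
    have hfil : S.filter (fun x => x.2 = j₀) = ∅ := by
      rw [Finset.eq_empty_iff_forall_notMem]
      rintro ⟨a, b⟩ hx
      rw [mem_filter] at hx
      have : a ∈ Finset.univ.filter (fun i : Fin m => (i, j₀) ∈ S) := by
        rw [mem_filter]
        exact ⟨mem_univ _, by rw [← hx.2]; exact hx.1⟩
      rw [hIne] at this
      exact absurd this (notMem_empty _)
    rw [colMarg, hfil, Finset.sum_empty, zero_mul]
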